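/- Let f be a coalgebra automorphism of finite order n of the matrix coalgebra M*(d,k). Then there exist a multiplicative matrix (e_ij)_{1≤i,j≤d} for M*(d,k) and nonzero scalars ω₁, …, ω_d ∈ k such that f(e_ij) = ω_i ω_j^{−1} e_ij for all i,j, and each ω_i ω_j^{−1} is an n-th root of unity. -/

import Mathlib

open TensorProduct

namespace HopfClass

variable (k : Type*) [Field k]

section Wrt

variable {M : Type*} [AddCommGroup M] [Module k M]

/-- A subspace `C` is a subcoalgebra with respect to a comultiplication-like map `Δ`
if `Δ` maps `C` into the image of `C ⊗ C` in `M ⊗ M`. -/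
def IsSubcoalgWrt (Δ : M →ₗ[k] M ⊗[k] M) (C : Submodule k M) : Prop :=
  ∀ x ∈ C, Δ x ∈ LinearMap.range (TensorProduct.map C.subtype C.subtype)

/-- A simple subcoalgebra: a nonzero subcoalgebra with no nonzero proper subcoalgebras. -/
def IsSimpleSubcoalgWrt (Δ : M →ₗ[k] M ⊗[k] M) (C : Submodule k M) : Prop :=
  IsSubcoalgWrt k Δ C ∧ C ≠ ⊥ ∧
    ∀ D : Submodule k M, IsSubcoalgWrt k Δ D → D < C → D = ⊥

/-- Pointedness: every simple subcoalgebra is one-dimensional. -/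
def IsPointedWrt (Δ : M →ₗ[k] M ⊗[k] M) : Prop :=
  ∀ C : Submodule k M, IsSimpleSubcoalgWrt k Δ C → Module.finrank k C = 1

/-- Grouplike element with respect to `Δ`. -/
def IsGrouplikeWrt (Δ : M →ₗ[k] M ⊗[k] M) (g : M) : Prop :=
  g ≠ 0 ∧ Δ g = g ⊗ₜ[k] g

/-- `y` is a `(h, g)`-skew-primitive with respect to `Δ`, i.e. `Δ y = g ⊗ y + y ⊗ h`. -/
def IsSkewPrimitiveWrt (Δ : M →ₗ[k] M ⊗[k] M) (g h y : M) : Prop :=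
  Δ y = g ⊗ₜ[k] y + y ⊗ₜ[k] h

/-- There are no nontrivial skew-primitive elements: every skew-primitive between grouplikes
is a scalar multiple of the difference of the grouplikes. -/
def HasNoNontrivialSkewPrimitivesWrt (Δ : M →ₗ[k] M ⊗[k] M) : Prop :=
  ∀ g h y : M, IsGrouplikeWrt k Δ g → IsGrouplikeWrt k Δ h →
    IsSkewPrimitiveWrt k Δ g h y → ∃ c : k, y = c • (g - h)

end Wrt

section Coalg

variable (H : Type*) [AddCommGroup H] [Module k H] [Coalgebra k H]

/-- The comultiplication of a coalgebra, as a linear map. -/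
noncomputable abbrev comulL : H →ₗ[k] H ⊗[k] H := CoalgebraStruct.comul

/-- The coradical of a coalgebra: the sum of all its simple subcoalgebras. -/
noncomputable def coradical : Submodule k H :=
  sSup {C : Submodule k H | IsSimpleSubcoalgWrt k (comulL k H) C}

/-- A coalgebra is cosemisimple if it equals its coradical. -/
def IsCosemisimple : Prop := coradical k H = ⊤

/-- A coalgebra is pointed if all its simple subcoalgebras are one-dimensional. -/
def IsPointed : Prop := IsPointedWrt k (comulL k H)

/-- The set of grouplike elements. -/
def grouplikes : Set H := {g : H | IsGrouplikeWrt k (comulL k H) g}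

/-- `e` is a multiplicative matrix of size `n` spanning the subspace `C`, i.e. a
linearly independent family with `Δ(e i j) = ∑ l, e i l ⊗ e l j` and `ε(e i j) = δ_ij`
whose span is `C`; this says precisely that `C` is a simple matrix subcoalgebra
isomorphic to `M*(n,k)`, the dual of the `n × n` matrix algebra. -/
def IsMultMatrix (n : ℕ) (C : Submodule k H) (e : Fin n → Fin n → H) : Prop :=
  LinearIndependent k (fun p : Fin n × Fin n => e p.1 p.2) ∧
  C = Submodule.span k (Set.range fun p : Fin n × Fin n => e p.1 p.2) ∧
  (∀ i j, CoalgebraStruct.comul (R := k) (e i j) = ∑ l : Fin n, e i l ⊗ₜ[k] e l j) ∧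
  (∀ i j, Coalgebra.counit (R := k) (e i j) = if i = j then (1 : k) else 0)

/-- `C` is a (simple matrix) subcoalgebra isomorphic to the matrix coalgebra `M*(n,k)`. -/
def IsMatrixSubcoalg (n : ℕ) (C : Submodule k H) : Prop :=
  ∃ e : Fin n → Fin n → H, IsMultMatrix k H n C e

end Coalg

section Dual

variable (H : Type*) [Ring H] [Algebra k H] [FiniteDimensional k H]

/-- The comultiplication on the dual of a finite-dimensional algebra:
the dual map of the multiplication, composed with the canonical identification
`(H ⊗ H)* ≃ H* ⊗ H*`. -/
noncomputable def dualComul :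
    Module.Dual k H →ₗ[k] Module.Dual k H ⊗[k] Module.Dual k H :=
  (TensorProduct.dualDistribEquiv k H H).symm.toLinearMap ∘ₗ
    (LinearMap.mul' k H).dualMap

/-- A finite-dimensional Hopf algebra is copointed if its dual is pointed. -/
def IsCopointed : Prop := IsPointedWrt k (dualComul k H)

/-- The grouplike elements of the dual Hopf algebra. -/
def dualGrouplikes : Set (Module.Dual k H) :=
  {f : Module.Dual k H | IsGrouplikeWrt k (dualComul k H) f}

end Dual

section Taft

variable (p : ℕ) (q : k)

/-- `B` is (isomorphic to) the Taft Hopf algebra `T_q` of dimension `p²`: `q` is a primitive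
`p`-th root of unity, `B` has dimension `p²` and is generated as an algebra by a grouplike `g`
and a `(1,g)`-skew-primitive `x` with `g^p = 1`, `x^p = 0` and `g x = q x g`. -/
def IsTaftAlgebra (B : Type*) [Ring B] [Bialgebra k B] : Prop :=
  IsPrimitiveRoot q p ∧ Module.finrank k B = p ^ 2 ∧
  ∃ g x : B,
    IsGrouplikeWrt k (comulL k B) g ∧
    CoalgebraStruct.comul (R := k) x = x ⊗ₜ[k] (1 : B) + g ⊗ₜ[k] x ∧
    g ^ p = 1 ∧ x ^ p = 0 ∧ g * x = q • (x * g) ∧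
    Algebra.adjoin k {g, x} = (⊤ : Subalgebra k B)

variable {H : Type*} [Ring H] [Bialgebra k H]

/-- The subalgebra `T` of `H` is a sub-Hopf algebra isomorphic to the Taft algebra `T_q` of
dimension `p²`, generated by a grouplike `g` and a `(1,g)`-skew-primitive `x` satisfying the
Taft relations. -/
def IsTaftSubalgebra (T : Subalgebra k H) : Prop :=
  IsPrimitiveRoot q p ∧ Module.finrank k T = p ^ 2 ∧
  ∃ g x : H,
    IsGrouplikeWrt k (comulL k H) g ∧
    CoalgebraStruct.comul (R := k) x = x ⊗ₜ[k] (1 : H) + g ⊗ₜ[k] x ∧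
    g ^ p = 1 ∧ x ^ p = 0 ∧ g * x = q • (x * g) ∧
    Algebra.adjoin k {g, x} = T

/-- The right coinvariants `H^{co π}` of a linear map `π : H → B` on a bialgebra `H`:
elements `h` with `(id ⊗ π)(Δ h) = h ⊗ 1`. -/
def rightCoinvariants {B : Type*} [Ring B] [Bialgebra k B] (π : H →ₗ[k] B) : Set H :=
  {h : H | (TensorProduct.map LinearMap.id π) (CoalgebraStruct.comul (R := k) h)
      = h ⊗ₜ[k] (1 : B)}

end Taft

end HopfClass
section Helpers

variable {k : Type*} [Field k] {D : Type*} [AddCommGroup D] [Module k D] {d : ℕ}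

lemma sum_pair_contract (c : Fin d → Fin d → D) (A B A' B' : Matrix (Fin d) (Fin d) k)
    (i j : Fin d) :
    ∑ pq : Fin d × Fin d, (A i pq.1 * B pq.2 j) •
        (∑ rs : Fin d × Fin d, (A' pq.1 rs.1 * B' rs.2 pq.2) • c rs.1 rs.2)
      = ∑ rs : Fin d × Fin d, ((A * A') i rs.1 * (B' * B) rs.2 j) • c rs.1 rs.2 := by
  simp only [Finset.smul_sum, smul_smul]
  rw [Finset.sum_comm]
  refine Finset.sum_congr rfl fun rs _ => ?_
  rw [← Finset.sum_smul]
  congr 1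
  rw [Matrix.mul_apply, Matrix.mul_apply, Finset.sum_mul_sum]
  rw [Fintype.sum_prod_type]
  refine Finset.sum_congr rfl fun a _ => Finset.sum_congr rfl fun b _ => by ring

lemma sum_pair_delta (c : Fin d → Fin d → D) (i j : Fin d) :
    ∑ pq : Fin d × Fin d, ((1 : Matrix (Fin d) (Fin d) k) i pq.1 *
        (1 : Matrix (Fin d) (Fin d) k) pq.2 j) • c pq.1 pq.2 = c i j := by
  rw [Fintype.sum_prod_type]
  simp only [Matrix.one_apply, ite_mul, mul_ite, one_mul, zero_mul, mul_one, mul_zero,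
    ite_smul, zero_smul, one_smul]
  rw [Finset.sum_eq_single i]
  · rw [Finset.sum_eq_single j]
    · simp
    · intro b _ hb
      simp [hb]
    · simp
  · intro a _ ha
    simp [Ne.symm ha]
  · simp

end Helpers

open Matrix in
/-- A complete system of matrix units in `M_d(k)` is conjugate to the standard one. -/
lemma matrixUnits_conjugate {k : Type*} [Field k] {d : ℕ} (hd : 0 < d)
    (M : Fin d → Fin d → Matrix (Fin d) (Fin d) k)
    (hmul : ∀ p q r s, M p q * M r s = if q = r then M p s else 0)
    (hone : ∑ p, M p p = 1) :
    ∃ U : Matrix (Fin d) (Fin d) k, ∃ _ : Invertible U,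
      ∀ p q i j, M p q i j = U i p * ⅟U q j := by
  have : NeZero d := ⟨hd.ne'⟩
  set z : Fin d := 0 with hz
  -- M z z ≠ 0
  have hMzz : M z z ≠ 0 := by
    intro h0
    have hzp : ∀ p, M z p = 0 := by
      intro p
      have := hmul z z z p
      simp [h0] at this
      exact this.symm
    have hpp : ∀ p, M p p = 0 := by
      intro p
      have := hmul p z z p
      simp [hzp p] at this
      exact this.symm
    rw [Finset.sum_congr rfl (fun p _ => hpp p), Finset.sum_const, smul_zero] at hone
    exact one_ne_zero hone.symm
  -- find v with (M z z) *ᵥ v ≠ 0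
  obtain ⟨i0, j0, hij⟩ : ∃ i j, M z z i j ≠ 0 := by
    by_contra h
    push_neg at h
    exact hMzz (Matrix.ext fun i j => h i j)
  set v : Fin d → k := Pi.single j0 1 with hv
  have hMv : (M z z) *ᵥ v ≠ 0 := by
    intro h
    apply hij
    have := congrFun h i0
    simpa [hv, mulVec, dotProduct, Pi.single_apply] using this
  set u : Fin d → (Fin d → k) := fun p => (M p z) *ᵥ v with hu
  have hMu : ∀ p q l, (M p q) *ᵥ (u l) = if q = l then u p else 0 := by
    intro p q l
    rw [hu]
    simp only [mulVec_mulVec, hmul]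
    split <;> simp
  have hlin : LinearIndependent k u := by
    rw [Fintype.linearIndependent_iff]
    intro g hg l
    have := congrArg (fun w => (M z l).mulVecLin w) hg
    simp only [map_sum, _root_.map_smul, map_zero, Matrix.mulVecLin_apply, hMu] at this
    simp only [smul_ite, smul_zero] at this
    rw [Finset.sum_ite_eq] at this
    simp only [Finset.mem_univ, if_true] at this
    rcases smul_eq_zero.mp this with h | h
    · exact h
    · exact absurd h hMv
  have hcard : Fintype.card (Fin d) = Module.finrank k (Fin d → k) := by
    simp [Module.finrank_pi]
  have : Nonempty (Fin d) := ⟨z⟩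
  let bu := basisOfLinearIndependentOfCardEqFinrank hlin hcard
  have hbu : ⇑bu = u := coe_basisOfLinearIndependentOfCardEqFinrank hlin hcard
  set U : Matrix (Fin d) (Fin d) k := (Pi.basisFun k (Fin d)).toMatrix bu with hU
  have : Invertible U := (Pi.basisFun k (Fin d)).invertibleToMatrix bu
  have hUentry : ∀ i p, U i p = u p i := by
    intro i p
    rw [hU, Module.Basis.toMatrix_apply, hbu]
    simp
  refine ⟨U, this, fun p q i j => ?_⟩
  have hMU : M p q * U = U * Matrix.single p q 1 := by
    ext a l
    have h1 : (M p q * U) a l = ((M p q) *ᵥ (u l)) a := by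
      simp [Matrix.mul_apply, Matrix.mulVec, dotProduct, hUentry]
    rw [h1, hMu]
    by_cases hql : q = l
    · subst hql
      rw [if_pos rfl, Matrix.mul_single_apply_same, mul_one, hUentry]
    · rw [if_neg hql, Matrix.mul_single_apply_of_ne (c := 1) p q a l (Ne.symm hql)]
      simp
  have hM : M p q = U * Matrix.single p q 1 * ⅟U := by
    rw [← hMU, mul_invOf_cancel_right]
  have hrow : ∀ b, (HMul.hMul U (Matrix.single p q (1:k)) : Matrix (Fin d) (Fin d) k) i b = if b = q then U i p else 0 := by
    intro b
    by_cases hb : b = q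
    · subst hb
      rw [if_pos rfl, Matrix.mul_single_apply_same, mul_one]
    · rw [if_neg hb, Matrix.mul_single_apply_of_ne (c := 1) p q i b hb]
  rw [hM, Matrix.mul_apply]
  simp only [hrow, ite_mul, zero_mul]
  rw [Finset.sum_ite_eq' Finset.univ q (fun b => U i p * ⅟U b j)]
  simp

open Matrix in
/-- A matrix whose `n`-th power is a nonzero scalar is diagonalizable
(over an algebraically closed field of characteristic zero). -/
lemma pow_scalar_diagonalizable {k : Type*} [Field k] [IsAlgClosed k] [CharZero k]
    {d n : ℕ} (hn : 0 < n) (U : Matrix (Fin d) (Fin d) k) (lam : k) (hlam : lam ≠ 0)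
    (hUn : U ^ n = lam • (1 : Matrix (Fin d) (Fin d) k)) :
    ∃ P : Matrix (Fin d) (Fin d) k, ∃ _ : Invertible P, ∃ ω : Fin d → k,
      (∀ i, ω i ≠ 0) ∧ (∀ i, ω i ^ n = lam) ∧ U * P = P * Matrix.diagonal ω := by
  classical
  set V : Type _ := Fin d → k
  set uu : Module.End k V := Matrix.toLinAlgEquiv' U with huu
  have huun : uu ^ n = lam • (1 : Module.End k V) := by
    rw [huu, ← map_pow, hUn, _root_.map_smul, _root_.map_one]
  -- the polynomial X^n - lam is squarefree and kills uu
  have hsep : Polynomial.Separable ((Polynomial.X : Polynomial k) ^ n - Polynomial.C lam) :=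
    Polynomial.separable_X_pow_sub_C lam (by exact_mod_cast Nat.cast_ne_zero.mpr hn.ne') hlam
  have hsf : Squarefree ((Polynomial.X : Polynomial k) ^ n - Polynomial.C lam) :=
    hsep.squarefree
  have haev : Polynomial.aeval uu ((Polynomial.X : Polynomial k) ^ n - Polynomial.C lam) = 0 := by
    simp [map_sub, map_pow, Polynomial.aeval_X, Polynomial.aeval_C, huun,
      Algebra.algebraMap_eq_smul_one]
  have hss : uu.IsSemisimple := Module.End.isSemisimple_of_squarefree_aeval_eq_zero hsf haev
  -- eigenvectors span
  have htop : ⨆ μ : k, uu.eigenspace μ = ⊤ := by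
    have h1 := Module.End.iSup_maxGenEigenspace_eq_top uu
    calc ⨆ μ : k, uu.eigenspace μ = ⨆ μ : k, uu.maxGenEigenspace μ := by
          refine iSup_congr fun μ => ?_
          exact (hss.isFinitelySemisimple.maxGenEigenspace_eq_eigenspace μ).symm
      _ = ⊤ := h1
  set S : Set V := {v : V | v ≠ 0 ∧ ∃ μ : k, uu v = μ • v} with hS
  have hspanS : Submodule.span k S = ⊤ := by
    rw [eq_top_iff, ← htop]
    refine iSup_le fun μ => fun x hx => ?_
    by_cases hx0 : x = 0
    · simp [hx0]
    · exact Submodule.subset_span ⟨hx0, μ, Module.End.mem_eigenspace_iff.mp hx⟩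
  obtain ⟨b, hbS, hbspan, hbind⟩ := exists_linearIndependent k S
  rw [hspanS] at hbspan
  have hfin : b.Finite := hbind.setFinite
  haveI := hfin.fintype
  let Bb : Module.Basis b k V := Module.Basis.mk hbind (by rw [Subtype.range_coe, hbspan])
  have hcard : Fintype.card b = d := by
    have h1 := Module.finrank_eq_card_basis Bb
    rw [Module.finrank_pi] at h1
    simpa using h1.symm
  let eqv : Fin d ≃ b := (Fintype.equivFinOfCardEq hcard).symm
  let bb : Module.Basis (Fin d) k V := Bb.reindex eqv.symm
  have hbbS : ∀ l : Fin d, (bb l : V) ∈ S := by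
    intro l
    have h2 : bb l = Bb (eqv l) := by
      simp [bb, Module.Basis.reindex_apply]
    rw [h2, Module.Basis.mk_apply]
    exact hbS (eqv l).2
  have hex : ∀ l, ∃ μ : k, uu (bb l) = μ • (bb l) := fun l => (hbbS l).2
  choose ω hω using hex
  have hbne : ∀ l, (bb l) ≠ 0 := fun l => (hbbS l).1
  have hωn : ∀ l, ω l ^ n = lam := by
    intro l
    have hiter : ∀ m : ℕ, (uu ^ m) (bb l) = (ω l) ^ m • bb l := by
      intro m
      induction m with
      | zero => simp
      | succ m ih =>
        rw [pow_succ', pow_succ']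
        simp only [Module.End.mul_apply, ih]
        rw [_root_.map_smul, hω, smul_smul, mul_comm]
    have h1 := hiter n
    rw [huun] at h1
    have h2 : (ω l ^ n - lam) • bb l = 0 := by
      rw [sub_smul, h1.symm]
      simp
    rcases smul_eq_zero.mp h2 with h | h
    · exact sub_eq_zero.mp h
    · exact absurd h (hbne l)
  have hωne : ∀ l, ω l ≠ 0 := fun l h => hlam (by rw [← hωn l, h, zero_pow hn.ne'])
  let P : Matrix (Fin d) (Fin d) k := (Pi.basisFun k (Fin d)).toMatrix bb
  haveI hPinv : Invertible P := (Pi.basisFun k (Fin d)).invertibleToMatrix bb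
  have hPentry : ∀ i l, P i l = bb l i := by
    intro i l
    simp [P, Module.Basis.toMatrix_apply]
  refine ⟨P, hPinv, ω, hωne, hωn, ?_⟩
  ext i l
  rw [Matrix.mul_apply, Matrix.mul_diagonal]
  have h3 : ∑ j, U i j * P j l = (U *ᵥ (bb l)) i := by
    simp [Matrix.mulVec, dotProduct, hPentry]
  rw [h3]
  have h4 : U *ᵥ (bb l) = ω l • bb l := by
    rw [← Matrix.toLinAlgEquiv'_apply, ← huu, hω]
  rw [h4]
  rw [hPentry, mul_comm]
  rfl

open HopfClass in
/-- Let `f` be a coalgebra automorphism of finite order `n` of the matrix coalgebra `M*(d,k)`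
(a coalgebra `D` with a multiplicative matrix basis of size `d`). Then there are a
multiplicative matrix `(e i j)` for `D` and nonzero scalars `ω₁, …, ω_d` with
`f (e i j) = ω_i ω_j⁻¹ • e i j` for all `i, j`, and each `ω_i ω_j⁻¹` is an `n`-th root
of unity. -/
theorem matrix_coalgebra_automorphism_diagonalizable
    (k : Type*) [Field k] [IsAlgClosed k] [CharZero k]
    (D : Type*) [AddCommGroup D] [Module k D] [Coalgebra k D]
    (d : ℕ) (hD : IsMatrixSubcoalg k D d (⊤ : Submodule k D))
    (f : Module.End k D)
    (hf_comul : comulL k D ∘ₗ f = TensorProduct.map f f ∘ₗ comulL k D)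
    (hf_counit : (Coalgebra.counit : D →ₗ[k] k) ∘ₗ f = Coalgebra.counit)
    (hf_bij : Function.Bijective f)
    (n : ℕ) (hn : 0 < n) (horder : orderOf f = n) :
    ∃ e : Fin d → Fin d → D, IsMultMatrix k D d (⊤ : Submodule k D) e ∧
      ∃ ω : Fin d → k, (∀ i, ω i ≠ 0) ∧
        (∀ i j, f (e i j) = (ω i * (ω j)⁻¹) • e i j) ∧
        (∀ i j, (ω i * (ω j)⁻¹) ^ n = 1) := by
  classical
  obtain ⟨c, hcind, hcspan, hccomul, hccount⟩ := hD
  rcases Nat.eq_zero_or_pos d with hd0 | hd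
  · subst hd0
    exact ⟨c, ⟨hcind, hcspan, hccomul, hccount⟩, Fin.elim0,
      fun i => i.elim0, fun i => i.elim0, fun i => i.elim0⟩
  have : NeZero d := ⟨hd.ne'⟩
  set z : Fin d := 0 with hz
  -- the basis given by the multiplicative matrix
  let B : Module.Basis (Fin d × Fin d) k D := Module.Basis.mk hcind (le_of_eq hcspan)
  have hB : ∀ p : Fin d × Fin d, B p = c p.1 p.2 := fun p => Module.Basis.mk_apply _ _ p
  have hrepr : ∀ (a b : Fin d) (pq : Fin d × Fin d),
      B.repr (c a b) pq = if (a, b) = pq then 1 else 0 := by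
    intro a b pq
    rw [show c a b = B (a, b) from (hB (a, b)).symm, B.repr_self, Finsupp.single_apply]
  -- the coefficient matrices of f
  set M : Fin d → Fin d → Matrix (Fin d) (Fin d) k :=
    fun p q => Matrix.of (fun i j => B.repr (f (c i j)) (p, q)) with hM
  have hMapp : ∀ p q i j, M p q i j = B.repr (f (c i j)) (p, q) := fun _ _ _ _ => rfl
  have hfc : ∀ i j, f (c i j) = ∑ pq : Fin d × Fin d, (M pq.1 pq.2 i j) • c pq.1 pq.2 := by
    intro i j
    conv_lhs => rw [← B.sum_repr (f (c i j))]
    exact Finset.sum_congr rfl fun p _ => by rw [hB, hMapp]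
  -- the matrix-units relations
  have hMmul : ∀ p q r s, M p q * M r s = if q = r then M p s else 0 := by
    intro p q r s
    ext i j
    have h1 : comulL k D (f (c i j)) = ∑ l, f (c i l) ⊗ₜ[k] f (c l j) := by
      have h := LinearMap.congr_fun hf_comul (c i j)
      simp only [LinearMap.comp_apply] at h
      rw [h, hccomul i j, map_sum]
      simp [TensorProduct.map_tmul]
    have h2 : comulL k D (f (c i j)) = ∑ ab : Fin d × Fin d, M ab.1 ab.2 i j •
        ∑ l, c ab.1 l ⊗ₜ[k] c l ab.2 := by
      rw [show comulL k D (f (c i j)) = CoalgebraStruct.comul (R := k) (f (c i j)) from rfl]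
      rw [hfc i j, map_sum]
      exact Finset.sum_congr rfl fun ab _ => by rw [map_smul, hccomul]
    have h3 := h1.symm.trans h2
    have h4 := congrArg (fun t => ((B.tensorProduct B).repr t) ((p, q), (r, s))) h3
    simp only [map_sum, Finsupp.coe_finset_sum, Finset.sum_apply, Finsupp.coe_smul,
      _root_.map_smul, Pi.smul_apply, Module.Basis.tensorProduct_repr_tmul_apply, smul_eq_mul,
      hrepr] at h4
    -- evaluate the right-hand side of h4
    have h5 : ∀ ab : Fin d × Fin d,
        (∑ l, (if (l, ab.2) = (r, s) then (1:k) else 0) * (if (ab.1, l) = (p, q) then 1 else 0))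
          = if ab.1 = p ∧ q = r ∧ ab.2 = s then 1 else 0 := by
      intro ab
      rw [Finset.sum_eq_single q]
      · simp only [Prod.mk.injEq]
        by_cases h1' : ab.1 = p <;> by_cases h2' : q = r <;> by_cases h3' : ab.2 = s <;>
          simp [h1', h2', h3']
      · intro l _ hl
        simp only [Prod.mk.injEq]
        simp [hl]
      · simp
    have h6 : (∑ x : Fin d × Fin d, M x.1 x.2 i j *
          ∑ x_1 : Fin d, (if (x_1, x.2) = (r, s) then (1:k) else 0) *
            (if (x.1, x_1) = (p, q) then 1 else 0))
        = if q = r then M p s i j else 0 := by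
      rw [Finset.sum_congr rfl (fun ab _ => by rw [h5 ab])]
      simp only [mul_ite, mul_one, mul_zero]
      rw [Finset.sum_eq_single ((p, s) : Fin d × Fin d)]
      · by_cases hqr : q = r <;> simp [hqr]
      · rintro ab _ hab
        have hno : ¬(ab.1 = p ∧ q = r ∧ ab.2 = s) := by
          rintro ⟨ha, -, hb⟩
          exact hab (Prod.ext ha hb)
        simp [hno]
      · simp
    rw [h6] at h4
    rw [Matrix.mul_apply]
    have h7 : ∑ l, M p q i l * M r s l j
        = ∑ x, B.repr (f (c x j)) (r, s) * B.repr (f (c i x)) (p, q) :=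
      Finset.sum_congr rfl fun l _ => by rw [hMapp, hMapp, mul_comm]
    rw [h7, h4]
    by_cases hqr : q = r <;> simp [hqr]
  have hMone : ∑ p, M p p = 1 := by
    ext i j
    have h := LinearMap.congr_fun hf_counit (c i j)
    simp only [LinearMap.comp_apply] at h
    rw [hfc i j, map_sum] at h
    simp only [_root_.map_smul, hccount, smul_eq_mul] at h
    rw [Fintype.sum_prod_type] at h
    simp only [mul_ite, mul_one, mul_zero] at h
    rw [Finset.sum_congr rfl (fun a _ => Finset.sum_ite_eq (Finset.univ) a
      (fun b => M a b i j))] at h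
    simp only [Finset.mem_univ, if_true] at h
    rw [Matrix.sum_apply]
    rw [h, Matrix.one_apply]
  -- conjugate the matrix units to the standard ones
  obtain ⟨U, hUinv, hU⟩ := matrixUnits_conjugate hd M hMmul hMone
  letI := hUinv
  have hfc' : ∀ a b, f (c a b) =
      ∑ pq : Fin d × Fin d, (U a pq.1 * ⅟U pq.2 b) • c pq.1 pq.2 := by
    intro a b
    rw [hfc a b]
    exact Finset.sum_congr rfl fun pq _ => by rw [hU pq.1 pq.2 a b]
  -- powers of f
  have hpow : ∀ m : ℕ, ∀ i j, (f ^ m) (c i j) =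
      ∑ pq : Fin d × Fin d, ((U ^ m) i pq.1 * ((⅟U) ^ m) pq.2 j) • c pq.1 pq.2 := by
    intro m
    induction m with
    | zero =>
      intro i j
      simp only [pow_zero, Module.End.one_apply]
      exact (sum_pair_delta c i j).symm
    | succ m ih =>
      intro i j
      have hstep : (f ^ (m + 1)) (c i j) = (f ^ m) (f (c i j)) := by
        rw [pow_succ]
        rfl
      rw [hstep, hfc' i j, map_sum]
      simp only [_root_.map_smul]
      rw [Finset.sum_congr rfl (fun pq _ => by rw [ih pq.1 pq.2])]
      rw [sum_pair_contract c U ⅟U (U ^ m) ((⅟U) ^ m) i j]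
      rw [← pow_succ', ← pow_succ]
  -- U ^ n is a nonzero scalar
  have hfn1 : f ^ n = 1 := by rw [← horder]; exact pow_orderOf_eq_one f
  have hcoeff : ∀ i j p q,
      (U ^ n) i p * ((⅟U) ^ n) q j = if (i, j) = (p, q) then (1:k) else 0 := by
    intro i j p q
    have h1 := hpow n i j
    rw [hfn1, Module.End.one_apply] at h1
    have h2 := congrArg (fun t => (B.repr t) (p, q)) h1
    simp only [map_sum, Finsupp.coe_finset_sum, Finset.sum_apply, _root_.map_smul,
      Finsupp.coe_smul, Pi.smul_apply, smul_eq_mul, hrepr, Prod.mk.eta] at h2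
    rw [Finset.sum_eq_single ((p, q) : Fin d × Fin d)] at h2
    · rw [if_pos rfl, mul_one] at h2
      exact h2.symm
    · intro st _ hst
      simp [hst]
    · simp
  set lam : k := (U ^ n) z z with hlamdef
  have h00 : lam * ((⅟U) ^ n) z z = 1 := by
    have := hcoeff z z z z
    simpa using this
  have hlam : lam ≠ 0 := left_ne_zero_of_mul_eq_one h00
  have hWzz : ((⅟U) ^ n) z z = lam⁻¹ := (inv_eq_of_mul_eq_one_right h00).symm
  have hUn : U ^ n = lam • (1 : Matrix (Fin d) (Fin d) k) := by
    ext i p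
    have h1 := hcoeff i z p z
    rw [hWzz] at h1
    have h2 := congrArg (fun t => t * lam) h1
    beta_reduce at h2
    rw [mul_assoc, inv_mul_cancel₀ hlam, mul_one] at h2
    rw [h2, Matrix.smul_apply, Matrix.one_apply, smul_eq_mul]
    by_cases hip : i = p
    · simp [hip]
    · have : ¬((i, z) = (p, z)) := fun h => hip (congrArg Prod.fst h)
      simp [this, hip]
  -- diagonalize U
  obtain ⟨P, hPinv, ω, hωne, hωn, hUP⟩ := pow_scalar_diagonalizable hn U lam hlam hUn
  letI := hPinv
  have hroot : ∀ i j, (ω i * (ω j)⁻¹) ^ n = 1 := by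
    intro i j
    rw [mul_pow, inv_pow, hωn, hωn, mul_inv_cancel₀ hlam]
  -- matrix identities
  have hA : ⅟P * U = Matrix.diagonal ω * ⅟P := by
    have h1 : ⅟P * (U * P) * ⅟P = ⅟P * U := by
      rw [← mul_assoc, mul_invOf_cancel_right]
    calc ⅟P * U = ⅟P * (U * P) * ⅟P := h1.symm
      _ = ⅟P * (P * Matrix.diagonal ω) * ⅟P := by rw [hUP]
      _ = Matrix.diagonal ω * ⅟P := by rw [invOf_mul_cancel_left]
  have hdd : Matrix.diagonal ω * Matrix.diagonal (fun t => (ω t)⁻¹)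
      = (1 : Matrix (Fin d) (Fin d) k) := by
    rw [Matrix.diagonal_mul_diagonal]
    rw [show (fun i => ω i * (ω i)⁻¹) = fun _ => (1:k) from
      funext fun i => mul_inv_cancel₀ (hωne i)]
    exact Matrix.diagonal_one
  have hBB : ⅟U * P = P * Matrix.diagonal (fun t => (ω t)⁻¹) := by
    calc ⅟U * P = ⅟U * ((P * Matrix.diagonal ω) * Matrix.diagonal fun t => (ω t)⁻¹) := by
          rw [mul_assoc P, hdd, mul_one]
      _ = ⅟U * (U * P * Matrix.diagonal fun t => (ω t)⁻¹) := by rw [hUP]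
      _ = P * Matrix.diagonal fun t => (ω t)⁻¹ := by
          rw [mul_assoc U P _, invOf_mul_cancel_left]
  -- the new multiplicative matrix
  set e : Fin d → Fin d → D :=
    fun i j => ∑ st : Fin d × Fin d, (⅟P i st.1 * P st.2 j) • c st.1 st.2 with he
  have hedef : ∀ i j, e i j
      = ∑ st : Fin d × Fin d, (⅟P i st.1 * P st.2 j) • c st.1 st.2 :=
    fun i j => congrFun (congrFun he i) j
  have hcE : ∀ a b, c a b =
      ∑ ij : Fin d × Fin d, (P a ij.1 * ⅟P ij.2 b) • e ij.1 ij.2 := by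
    intro a b
    rw [show (fun ij : Fin d × Fin d => (P a ij.1 * ⅟P ij.2 b) • e ij.1 ij.2)
          = fun ij : Fin d × Fin d => (P a ij.1 * ⅟P ij.2 b) •
            (∑ st : Fin d × Fin d, (⅟P ij.1 st.1 * P st.2 ij.2) • c st.1 st.2) from rfl]
    rw [sum_pair_contract c P ⅟P ⅟P P a b, mul_invOf_self]
    exact (sum_pair_delta c a b).symm
  have hespan : (⊤ : Submodule k D)
      = Submodule.span k (Set.range fun p : Fin d × Fin d => e p.1 p.2) := by
    refine le_antisymm ?_ le_top
    rw [hcspan, Submodule.span_le]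
    rintro x ⟨pq, rfl⟩
    show c pq.1 pq.2 ∈ _
    rw [hcE pq.1 pq.2]
    exact Submodule.sum_mem _ fun ij _ => Submodule.smul_mem _ _
      (Submodule.subset_span ⟨(ij.1, ij.2), rfl⟩)
  have heind : LinearIndependent k (fun p : Fin d × Fin d => e p.1 p.2) := by
    have hcard : Fintype.card (Fin d × Fin d) = Module.finrank k D :=
      (Module.finrank_eq_card_basis B).symm
    exact linearIndependent_of_top_le_span_of_card_eq_finrank (le_of_eq hespan) hcard
  have hecomul : ∀ i j, CoalgebraStruct.comul (R := k) (e i j)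
      = ∑ l : Fin d, e i l ⊗ₜ[k] e l j := by
    intro i j
    have hstep1 : ∀ u : Fin d,
        e i u ⊗ₜ[k] e u j = ∑ as : Fin d × Fin d, ∑ tb : Fin d × Fin d,
          ((⅟P i as.1 * P as.2 u) * (⅟P u tb.1 * P tb.2 j)) •
            (c as.1 as.2 ⊗ₜ[k] c tb.1 tb.2) := by
      intro u
      rw [hedef i u, hedef u j]
      rw [TensorProduct.sum_tmul]
      refine Finset.sum_congr rfl fun as _ => ?_
      rw [← TensorProduct.smul_tmul', TensorProduct.tmul_sum, Finset.smul_sum]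
      refine Finset.sum_congr rfl fun tb _ => ?_
      rw [TensorProduct.tmul_smul, smul_smul]
    have hstep2 : ∀ (as tb : Fin d × Fin d),
        (∑ u, ((⅟P i as.1 * P as.2 u) * (⅟P u tb.1 * P tb.2 j)))
          = (⅟P i as.1 * P tb.2 j) * (if as.2 = tb.1 then 1 else 0) := by
      intro as tb
      have h1 : (∑ u, ((⅟P i as.1 * P as.2 u) * (⅟P u tb.1 * P tb.2 j)))
          = (⅟P i as.1 * P tb.2 j) * ∑ u, P as.2 u * ⅟P u tb.1 := by
        rw [Finset.mul_sum]
        exact Finset.sum_congr rfl fun u _ => by ring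
      rw [h1, ← Matrix.mul_apply, mul_invOf_self, Matrix.one_apply]
    have hR : (∑ l : Fin d, e i l ⊗ₜ[k] e l j)
        = ∑ as : Fin d × Fin d, ∑ t, ∑ b,
            ((⅟P i as.1 * P b j) * (if as.2 = t then 1 else 0)) •
              (c as.1 as.2 ⊗ₜ[k] c t b) := by
      rw [Finset.sum_congr rfl fun u _ => hstep1 u]
      rw [Finset.sum_comm]
      refine Finset.sum_congr rfl fun as _ => ?_
      rw [Finset.sum_comm]
      rw [Fintype.sum_prod_type]
      refine Finset.sum_congr rfl fun t _ => Finset.sum_congr rfl fun b _ => ?_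
      rw [← Finset.sum_smul, hstep2 as (t, b)]
    have hR2 : (∑ l : Fin d, e i l ⊗ₜ[k] e l j)
        = ∑ as : Fin d × Fin d, ∑ b, (⅟P i as.1 * P b j) •
            (c as.1 as.2 ⊗ₜ[k] c as.2 b) := by
      rw [hR]
      refine Finset.sum_congr rfl fun as _ => ?_
      rw [Finset.sum_comm]
      refine Finset.sum_congr rfl fun b _ => ?_
      rw [Finset.sum_eq_single as.2]
      · simp
      · intro t _ ht
        simp [Ne.symm ht]
      · simp
    have hL : CoalgebraStruct.comul (R := k) (e i j)
        = ∑ as : Fin d × Fin d, ∑ b, (⅟P i as.1 * P b j) •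
            (c as.1 as.2 ⊗ₜ[k] c as.2 b) := by
      rw [hedef i j, map_sum]
      rw [Finset.sum_congr rfl fun st _ => by
        rw [_root_.map_smul, hccomul st.1 st.2, Finset.smul_sum]]
      rw [Fintype.sum_prod_type]
      conv_rhs => rw [Fintype.sum_prod_type]
      exact Finset.sum_congr rfl fun a _ => Finset.sum_comm
    exact hL.trans hR2.symm
  have hecount : ∀ i j, Coalgebra.counit (R := k) (e i j) = if i = j then (1:k) else 0 := by
    intro i j
    rw [hedef i j, map_sum]
    rw [Finset.sum_congr rfl fun st _ => by rw [_root_.map_smul, hccount st.1 st.2]]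
    rw [Fintype.sum_prod_type]
    simp only [smul_eq_mul, mul_ite, mul_one, mul_zero]
    rw [Finset.sum_congr rfl (fun a _ => Finset.sum_ite_eq Finset.univ a
      (fun b => ⅟P i a * P b j))]
    simp only [Finset.mem_univ, if_true]
    rw [← Matrix.mul_apply, invOf_mul_self, Matrix.one_apply]
  have hfe : ∀ i j, f (e i j) = (ω i * (ω j)⁻¹) • e i j := by
    intro i j
    rw [hedef i j, map_sum]
    rw [Finset.sum_congr rfl fun st _ => by rw [_root_.map_smul, hfc' st.1 st.2]]
    rw [sum_pair_contract c ⅟P P U ⅟U i j]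
    rw [hA, hBB, Finset.smul_sum]
    refine Finset.sum_congr rfl fun rs _ => ?_
    rw [Matrix.diagonal_mul, Matrix.mul_diagonal, smul_smul]
    congr 1
    ring
  exact ⟨e, ⟨heind, hespan, hecomul, hecount⟩, ω, hωne, hfe, hroot⟩
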